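/- If a fractional solution x to the tree-edge covering LP satisfies x(δ(e)) ≥ 4/3 for every tree edge e (no deficient edges), and k is such that k·x is integral, then after splitting each link ℓ into two up-links each with (3/2)·k·x_ℓ copies, every tree edge is covered by at least 2k copies; hence 3k·x dominates the sum of 2k integral feasible tree-edge covers (in the greedy top-down coloring), giving an integral solution of cost at most 3/2 times the cost of x. -/

import Mathlib

/-- A link with endpoints `u`, `w` covers a tree edge `e` if `e` lies on the
(unique) path between `u` and `w` in the tree `G`. -/
def Covers {V : Type*} (G : SimpleGraph V) (u w : V) (e : Sym2 V) : Prop :=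
  ∃ p : G.Walk u w, p.IsPath ∧ e ∈ p.edges

open Classical in
/-- `x(δ(e))`: total fractional weight of links covering the tree edge `e`. -/
noncomputable def covWeight {V : Type*} [Fintype V] (G : SimpleGraph V)
    (x : V × V → ℝ) (e : Sym2 V) : ℝ :=
  ∑ ℓ ∈ Finset.univ.filter (fun ℓ : V × V => Covers G ℓ.1 ℓ.2 e), x ℓ

/- STATEMENT 6: if `x(δ(e)) ≥ 4/3` for every tree edge `e` (no deficient edges)
and `k·x` is integral, then after splitting each link into two up-links, each
with `(3/2)·k·x_ℓ` copies, every tree edge is covered by at least `2k` copies;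
hence there is an integral feasible augmentation of cost at most `(3/2)` times
the cost of `x`. -/
set_option linter.unusedSectionVars false

open SimpleGraph Finset

namespace TAPdev

variable {V : Type*} [Fintype V] [DecidableEq V]

variable (G : SimpleGraph V)

noncomputable def P (hT : G.IsTree) (r v : V) : G.Walk v r :=
  (hT.existsUnique_path v r).choose

lemma P_isPath (hT : G.IsTree) (r v : V) : (P G hT r v).IsPath :=
  (hT.existsUnique_path v r).choose_spec.1

lemma P_unique (hT : G.IsTree) (r v : V) (q : G.Walk v r) (hq : q.IsPath) :
    q = P G hT r v :=
  (hT.existsUnique_path v r).choose_spec.2 q hq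

lemma P_r (hT : G.IsTree) (r : V) : P G hT r r = SimpleGraph.Walk.nil :=
  (P_unique G hT r r SimpleGraph.Walk.nil SimpleGraph.Walk.IsPath.nil).symm

noncomputable def par (hT : G.IsTree) (r v : V) : V := (P G hT r v).getVert 1

lemma par_r (hT : G.IsTree) (r : V) : par G hT r r = r := by
  unfold par; rw [P_r]; rfl

lemma P_step (hT : G.IsTree) (r v : V) (hv : v ≠ r) :
    G.Adj v (par G hT r v) ∧
    (P G hT r v).support = v :: (P G hT r (par G hT r v)).support ∧
    (P G hT r v).edges = s(v, par G hT r v) :: (P G hT r (par G hT r v)).edges ∧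
    (P G hT r v).length = (P G hT r (par G hT r v)).length + 1 := by
  obtain ⟨w, hadj, q, hq⟩ := SimpleGraph.Walk.exists_eq_cons_of_ne hv (P G hT r v)
  have hqp : q.IsPath := by
    have := P_isPath G hT r v
    rw [hq] at this
    exact this.of_cons
  have hw : par G hT r v = w := by
    unfold par; rw [hq]
    simp [SimpleGraph.Walk.getVert_cons_succ]
  have hq' : q = P G hT r w := P_unique G hT r w q hqp
  subst hw
  rw [hq, hq']
  refine ⟨hadj, ?_, ?_, ?_⟩ <;> simp

variable (hT : G.IsTree) (r : V)

/-- depth -/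
noncomputable def dep (v : V) : ℕ := (P G hT r v).length

lemma dep_r : dep G hT r r = 0 := by unfold dep; rw [P_r]; rfl

lemma eq_r_of_dep (v : V) (h : dep G hT r v = 0) : v = r :=
  SimpleGraph.Walk.eq_of_length_eq_zero h

lemma dep_par (v : V) (hv : v ≠ r) :
    dep G hT r (par G hT r v) + 1 = dep G hT r v := ((P_step G hT r v hv).2.2.2).symm

/-- ancestor-or-equal -/
def anc (v u : V) : Prop := v ∈ (P G hT r u).support

lemma anc_refl (v : V) : anc G hT r v v := SimpleGraph.Walk.start_mem_support _

lemma anc_r (v : V) : anc G hT r r v := SimpleGraph.Walk.end_mem_support _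

lemma anc_of_r (v : V) (h : anc G hT r v r) : v = r := by
  unfold anc at h; rw [P_r] at h; simpa using h

lemma anc_iff (u v : V) (hv : v ≠ r) :
    anc G hT r u v ↔ u = v ∨ anc G hT r u (par G hT r v) := by
  unfold anc; rw [(P_step G hT r v hv).2.1]; simp

lemma anc_par (v : V) (hv : v ≠ r) : anc G hT r (par G hT r v) v := by
  rw [anc_iff _ _ _ _ _ hv]; exact Or.inr (anc_refl _ _ _ _)

lemma anc_dep_lt : ∀ n v u, dep G hT r v = n → anc G hT r u v →
    dep G hT r u ≤ dep G hT r v ∧ (u ≠ v → dep G hT r u < dep G hT r v) := by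
  intro n
  induction n using Nat.strong_induction_on with
  | _ n ih =>
    intro v u hn hu
    by_cases hv : v = r
    · have hur : u = r := anc_of_r G hT r u (by rwa [hv] at hu)
      rw [hv, hur]
      simp
    · rcases (anc_iff G hT r u v hv).1 hu with h | h
      · subst h; simp
      · have hlt : dep G hT r (par G hT r v) < n := by
          rw [← hn, ← dep_par G hT r v hv]; omega
        have := ih _ hlt (par G hT r v) u rfl h
        have h2 := dep_par G hT r v hv
        constructor
        · omega
        · intro _; omega

lemma anc_dep_le (u v : V) (h : anc G hT r u v) : dep G hT r u ≤ dep G hT r v :=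
  (anc_dep_lt G hT r _ v u rfl h).1

lemma anc_eq (u v : V) (h : anc G hT r u v) (hd : dep G hT r v ≤ dep G hT r u) : u = v := by
  by_contra hne
  have := (anc_dep_lt G hT r _ v u rfl h).2 hne
  omega

lemma anc_trans : ∀ n v u z, dep G hT r v = n → anc G hT r u v → anc G hT r z u →
    anc G hT r z v := by
  intro n
  induction n using Nat.strong_induction_on with
  | _ n ih =>
    intro v u z hn hu hz
    by_cases hv : v = r
    · have hur : u = r := anc_of_r G hT r u (by rwa [hv] at hu)
      rw [hv]
      rw [hur] at hz
      exact hz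
    · rcases (anc_iff G hT r u v hv).1 hu with h | h
      · subst h; exact hz
      · have hlt : dep G hT r (par G hT r v) < n := by
          have := dep_par G hT r v hv; omega
        have := ih _ hlt (par G hT r v) u z rfl h hz
        rw [anc_iff G hT r z v hv]; exact Or.inr this

lemma anc_total : ∀ n v u z, dep G hT r v = n → anc G hT r u v → anc G hT r z v →
    anc G hT r u z ∨ anc G hT r z u := by
  intro n
  induction n using Nat.strong_induction_on with
  | _ n ih =>
    intro v u z hn hu hz
    by_cases hv : v = r
    · have hur : u = r := anc_of_r G hT r u (by rwa [hv] at hu)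
      exact Or.inl (hur ▸ anc_r G hT r z)
    · rcases (anc_iff G hT r u v hv).1 hu with h | h
      · subst h; exact Or.inr hz
      · rcases (anc_iff G hT r z v hv).1 hz with h2 | h2
        · subst h2; exact Or.inl hu
        · have hlt : dep G hT r (par G hT r v) < n := by
            have := dep_par G hT r v hv; omega
          exact ih _ hlt (par G hT r v) u z rfl h h2

lemma anc_of_dep_le (v u z : V) (hu : anc G hT r u v) (hz : anc G hT r z v)
    (hd : dep G hT r u ≤ dep G hT r z) : anc G hT r u z := by
  rcases anc_total G hT r _ v u z rfl hu hz with h | h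
  · exact h
  · have : z = u := anc_eq G hT r z u h hd
    subst this; exact anc_refl G hT r z

lemma adj_anc_par (a b : V) (hadj : G.Adj a b) (hb : anc G hT r b a) :
    par G hT r a = b := by
  have ha : a ≠ r := by
    intro h
    rw [h] at hadj hb
    have := anc_of_r G hT r b hb
    rw [this] at hadj
    exact G.irrefl hadj
  rcases (anc_iff G hT r b a ha).1 hb with h | h
  · exact absurd h.symm hadj.ne
  · -- b is an ancestor of par a; show a ∉ supp (P b) and conclude P a = cons hadj (P b)
    have hna : ¬ anc G hT r a b := by
      intro hab
      have h1 : dep G hT r a ≤ dep G hT r b := anc_dep_le G hT r a b hab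
      have h2 : dep G hT r b ≤ dep G hT r (par G hT r a) := anc_dep_le G hT r b _ h
      have h3 := dep_par G hT r a ha
      omega
    have hpath : (SimpleGraph.Walk.cons hadj (P G hT r b)).IsPath := by
      apply (P_isPath G hT r b).cons
      exact hna
    have := P_unique G hT r a _ hpath
    have : par G hT r a = (SimpleGraph.Walk.cons hadj (P G hT r b)).getVert 1 := by
      unfold par; rw [← this]
    rw [this]
    simp [SimpleGraph.Walk.getVert_cons_succ]

lemma adj_par (a b : V) (hadj : G.Adj a b) :
    par G hT r a = b ∨ par G hT r b = a := by
  by_cases hb : anc G hT r b a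
  · exact Or.inl (adj_anc_par G hT r a b hadj hb)
  · right
    apply adj_anc_par G hT r b a hadj.symm
    by_contra hna
    have hpath : (SimpleGraph.Walk.cons hadj (P G hT r b)).IsPath :=
      (P_isPath G hT r b).cons hna
    have := P_unique G hT r a _ hpath
    apply hb
    unfold anc
    rw [← this]
    simp [SimpleGraph.Walk.support_cons]

lemma par_not_both (a b : V) (hadj : G.Adj a b) (h1 : par G hT r a = b)
    (h2 : par G hT r b = a) : False := by
  have ha : a ≠ r := by
    intro h
    rw [h, par_r] at h1
    rw [← h1, par_r] at h2
    exact hadj.ne (h2.symm.trans h1)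
  have hb : b ≠ r := by
    intro h
    rw [h, par_r] at h2
    rw [← h2, par_r] at h1
    exact hadj.ne (h2.symm.trans h1)
  have d1 := dep_par G hT r a ha
  have d2 := dep_par G hT r b hb
  rw [h1] at d1; rw [h2] at d2
  omega

/-- The endpoint of a tree edge that is further from the root. -/
noncomputable def cvx (e : Sym2 V) : V :=
  if h : ∃ v, v ∈ e ∧ par G hT r v ∈ e ∧ par G hT r v ≠ v then h.choose else r

lemma cvx_pred_uniq (e : Sym2 V) (he : e ∈ G.edgeSet) (v w : V)
    (hv : v ∈ e ∧ par G hT r v ∈ e ∧ par G hT r v ≠ v)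
    (hw : w ∈ e ∧ par G hT r w ∈ e ∧ par G hT r w ≠ w) : v = w := by
  induction e with
  | _ a b =>
    have hadj : G.Adj a b := (G.mem_edgeSet).1 he
    by_contra hne
    obtain ⟨hv1, hv2, hv3⟩ := hv
    obtain ⟨hw1, hw2, hw3⟩ := hw
    rw [Sym2.mem_iff] at hv1 hv2 hw1 hw2
    have hab : a ≠ b := hadj.ne
    -- v, w ∈ {a,b}, v ≠ w
    have hpv : par G hT r v = w := by
      rcases hv1 with rfl | rfl <;> rcases hw1 with rfl | rfl <;>
        first
        | exact absurd rfl hne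
        | (rcases hv2 with h | h <;> first | exact absurd h hv3 | exact h)
    have hpw : par G hT r w = v := by
      rcases hv1 with rfl | rfl <;> rcases hw1 with rfl | rfl <;>
        first
        | exact absurd rfl hne
        | (rcases hw2 with h | h <;> first | exact absurd h hw3 | exact h)
    have hadj' : G.Adj v w := by
      rcases hv1 with rfl | rfl <;> rcases hw1 with rfl | rfl <;>
        first
        | exact absurd rfl hne
        | exact hadj
        | exact hadj.symm
    exact par_not_both G hT r v w hadj' hpv hpw

lemma cvx_exists (e : Sym2 V) (he : e ∈ G.edgeSet) :
    ∃ v, v ∈ e ∧ par G hT r v ∈ e ∧ par G hT r v ≠ v := by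
  induction e with
  | _ a b =>
    have hadj : G.Adj a b := (G.mem_edgeSet).1 he
    rcases adj_par G hT r a b hadj with h | h
    · exact ⟨a, Sym2.mem_mk_left a b, by rw [h]; exact Sym2.mem_mk_right a b,
        by rw [h]; exact hadj.ne'⟩
    · exact ⟨b, Sym2.mem_mk_right a b, by rw [h]; exact Sym2.mem_mk_left a b,
        by rw [h]; exact hadj.ne⟩

lemma cvx_spec (e : Sym2 V) (he : e ∈ G.edgeSet) :
    cvx G hT r e ∈ e ∧ par G hT r (cvx G hT r e) ∈ e ∧
      par G hT r (cvx G hT r e) ≠ cvx G hT r e := by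
  unfold cvx
  rw [dif_pos (cvx_exists G hT r e he)]
  exact (cvx_exists G hT r e he).choose_spec

lemma cvx_uniq (e : Sym2 V) (he : e ∈ G.edgeSet) (v : V)
    (h1 : v ∈ e) (h2 : par G hT r v ∈ e) (h3 : par G hT r v ≠ v) :
    v = cvx G hT r e :=
  cvx_pred_uniq G hT r e he v _ ⟨h1, h2, h3⟩ (cvx_spec G hT r e he)

lemma cvx_eq (e : Sym2 V) (he : e ∈ G.edgeSet) :
    e = s(cvx G hT r e, par G hT r (cvx G hT r e)) := by
  obtain ⟨h1, h2, h3⟩ := cvx_spec G hT r e he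
  induction e with
  | _ a b =>
    rw [Sym2.mem_iff] at h1 h2
    rcases h1 with h1 | h1 <;> rcases h2 with h2 | h2
    · exact absurd (h2.trans h1.symm) h3
    · rw [h2, h1]
    · rw [h2, h1, Sym2.eq_swap]
    · exact absurd (h2.trans h1.symm) h3

lemma cvx_ne_r (e : Sym2 V) (he : e ∈ G.edgeSet) : cvx G hT r e ≠ r := by
  intro h
  have := (cvx_spec G hT r e he).2.2
  rw [h, par_r] at this
  exact this rfl

/-- coverage of a tree edge `e` by the vertical segment from `a` up to `b` -/
def covE (a b : V) (e : Sym2 V) : Prop :=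
  anc G hT r (cvx G hT r e) a ∧ anc G hT r b (cvx G hT r e) ∧ cvx G hT r e ≠ b

lemma exists_walkUp : ∀ n a b, dep G hT r a = n → anc G hT r b a →
    ∃ p : G.Walk a b, p.IsPath ∧
      (∀ z, z ∈ p.support ↔ (anc G hT r z a ∧ anc G hT r b z)) ∧
      (∀ e, e ∈ G.edgeSet → (e ∈ p.edges ↔ covE G hT r a b e)) := by
  intro n
  induction n using Nat.strong_induction_on with
  | _ n ih =>
    intro a b hn hb
    by_cases hab : a = b
    · subst hab
      refine ⟨SimpleGraph.Walk.nil, SimpleGraph.Walk.IsPath.nil, ?_, ?_⟩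
      · intro z
        simp only [SimpleGraph.Walk.support_nil, List.mem_singleton]
        constructor
        · rintro rfl
          exact ⟨anc_refl G hT r z, anc_refl G hT r z⟩
        · rintro ⟨h1, h2⟩
          exact anc_eq G hT r z a h1 (anc_dep_le G hT r a z h2)
      · intro e _
        simp only [SimpleGraph.Walk.edges_nil, List.not_mem_nil, false_iff]
        rintro ⟨h1, h2, h3⟩
        exact h3 (anc_eq G hT r _ a h1 (anc_dep_le G hT r a _ h2))
    · have ha : a ≠ r := by
        intro h
        rw [h] at hb
        exact hab ((anc_of_r G hT r b hb).symm ▸ h)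
      have hb' : anc G hT r b (par G hT r a) := by
        rcases (anc_iff G hT r b a ha).1 hb with h | h
        · exact absurd h.symm hab
        · exact h
      have hdlt : dep G hT r (par G hT r a) < n := by
        have := dep_par G hT r a ha; omega
      obtain ⟨q, hq, hqs, hqe⟩ := ih _ hdlt (par G hT r a) b rfl hb'
      have hadj : G.Adj a (par G hT r a) := (P_step G hT r a ha).1
      have hnotin : a ∉ q.support := by
        intro hmem
        have := ((hqs a).1 hmem).1
        have h1 := anc_dep_le G hT r a _ this
        have h2 := dep_par G hT r a ha
        omega
      refine ⟨SimpleGraph.Walk.cons hadj q, hq.cons hnotin, ?_, ?_⟩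
      · intro z
        rw [SimpleGraph.Walk.support_cons, List.mem_cons]
        constructor
        · rintro (rfl | hz)
          · exact ⟨anc_refl G hT r z, hb⟩
          · obtain ⟨h1, h2⟩ := (hqs z).1 hz
            exact ⟨(anc_iff G hT r z a ha).2 (Or.inr h1), h2⟩
        · rintro ⟨h1, h2⟩
          rcases (anc_iff G hT r z a ha).1 h1 with rfl | h
          · exact Or.inl rfl
          · exact Or.inr ((hqs z).2 ⟨h, h2⟩)
      · intro e hee
        rw [SimpleGraph.Walk.edges_cons, List.mem_cons]
        constructor
        · rintro (rfl | hz)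
          · have hc : a = cvx G hT r s(a, par G hT r a) := by
              apply cvx_uniq G hT r _ hee a (Sym2.mem_mk_left _ _)
                (Sym2.mem_mk_right _ _) hadj.ne'
            refine ⟨hc ▸ anc_refl G hT r a, hc ▸ hb, by rw [← hc]; exact hab⟩
          · obtain ⟨h1, h2, h3⟩ := (hqe e hee).1 hz
            exact ⟨(anc_iff G hT r _ a ha).2 (Or.inr h1), h2, h3⟩
        · rintro ⟨h1, h2, h3⟩
          rcases (anc_iff G hT r _ a ha).1 h1 with hce | hce
          · left
            have := cvx_eq G hT r e hee
            rw [this, hce]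
          · exact Or.inr ((hqe e hee).2 ⟨hce, h2, h3⟩)

lemma exists_meet (u w : V) :
    ∃ m, anc G hT r m u ∧ anc G hT r m w ∧
      ∀ z, anc G hT r z u → anc G hT r z w → anc G hT r z m := by
  suffices h : ∀ n u w, dep G hT r u = n → ∃ m, anc G hT r m u ∧ anc G hT r m w ∧
      ∀ z, anc G hT r z u → anc G hT r z w → anc G hT r z m by
    exact h _ u w rfl
  intro n
  induction n using Nat.strong_induction_on with
  | _ n ih =>
    intro u w hn
    by_cases hu : anc G hT r u w
    · exact ⟨u, anc_refl G hT r u, hu, fun z hz _ => hz⟩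
    · have hur : u ≠ r := by
        intro h
        apply hu
        rw [h]
        exact anc_r G hT r w
      have hdlt : dep G hT r (par G hT r u) < n := by
        have := dep_par G hT r u hur; omega
      obtain ⟨m, h1, h2, h3⟩ := ih _ hdlt (par G hT r u) w rfl
      refine ⟨m, (anc_iff G hT r m u hur).2 (Or.inr h1), h2, ?_⟩
      intro z hz hzw
      rcases (anc_iff G hT r z u hur).1 hz with rfl | h
      · exact absurd hzw hu
      · exact h3 z h hzw

noncomputable def meet (u w : V) : V := (exists_meet G hT r u w).choose

lemma meet_spec (u w : V) :
    anc G hT r (meet G hT r u w) u ∧ anc G hT r (meet G hT r u w) w ∧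
      ∀ z, anc G hT r z u → anc G hT r z w → anc G hT r z (meet G hT r u w) :=
  (exists_meet G hT r u w).choose_spec

/-- Claim A: a link covers a tree edge iff exactly one of its two half segments covers it. -/
lemma covers_iff (u w : V) (e : Sym2 V) (he : e ∈ G.edgeSet) :
    Covers G u w e ↔
      (covE G hT r u (meet G hT r u w) e ∨ covE G hT r w (meet G hT r u w) e) := by
  obtain ⟨hm1, hm2, hm3⟩ := meet_spec G hT r u w
  obtain ⟨p1, hp1, hp1s, hp1e⟩ := exists_walkUp G hT r _ u (meet G hT r u w) rfl hm1
  obtain ⟨p2, hp2, hp2s, hp2e⟩ := exists_walkUp G hT r _ w (meet G hT r u w) rfl hm2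
  have hp2r : p2.reverse.IsPath := hp2.reverse
  have hdisj : ∀ z, z ∈ p1.support → z ∈ p2.support → z = (meet G hT r u w) := by
    intro z hz1 hz2
    obtain ⟨ha1, ha2⟩ := (hp1s z).1 hz1
    obtain ⟨hb1, _⟩ := (hp2s z).1 hz2
    have := hm3 z ha1 hb1
    exact anc_eq G hT r z (meet G hT r u w) this (anc_dep_le G hT r (meet G hT r u w) z ha2)
  have hq : (p1.append p2.reverse).IsPath := by
    rw [SimpleGraph.Walk.isPath_def, SimpleGraph.Walk.support_append]
    rw [List.nodup_append]
    refine ⟨hp1.support_nodup, ?_, ?_⟩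
    · exact (hp2r.support_nodup).tail
    · intro z hz1 z' hz2 hzz
      subst hzz
      have hz2' : z ∈ p2.reverse.support := List.mem_of_mem_tail hz2
      rw [SimpleGraph.Walk.support_reverse, List.mem_reverse] at hz2'
      have hzm : z = (meet G hT r u w) := hdisj z hz1 hz2'
      subst hzm
      have : p2.reverse.support = (meet G hT r u w) :: p2.reverse.support.tail :=
        SimpleGraph.Walk.support_eq_cons _
      have hnodup := hp2r.support_nodup
      rw [this] at hnodup
      exact (List.nodup_cons.1 hnodup).1 hz2
  have hedges : ∀ e', e' ∈ (p1.append p2.reverse).edges ↔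
      (e' ∈ p1.edges ∨ e' ∈ p2.edges) := by
    intro e'
    rw [SimpleGraph.Walk.edges_append, List.mem_append,
      SimpleGraph.Walk.edges_reverse, List.mem_reverse]
  constructor
  · rintro ⟨p, hp, hep⟩
    have : p = p1.append p2.reverse := (hT.existsUnique_path u w).unique hp hq
    rw [this] at hep
    rcases (hedges e).1 hep with h | h
    · exact Or.inl ((hp1e e he).1 h)
    · exact Or.inr ((hp2e e he).1 h)
  · intro h
    refine ⟨p1.append p2.reverse, hq, (hedges e).2 ?_⟩
    rcases h with h | h
    · exact Or.inl ((hp1e e he).2 h)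
    · exact Or.inr ((hp2e e he).2 h)

lemma covers_not_both (u w : V) (e : Sym2 V) :
    ¬(covE G hT r u (meet G hT r u w) e ∧ covE G hT r w (meet G hT r u w) e) := by
  rintro ⟨⟨h1, h2, h3⟩, ⟨g1, _, _⟩⟩
  obtain ⟨_, _, hm3⟩ := meet_spec G hT r u w
  have := hm3 _ h1 g1
  exact h3 (anc_eq G hT r _ _ this (anc_dep_le G hT r _ _ h2))



/-! ### Copies of half-links -/

variable {W : Type*}

lemma sum_pairs {M : Type*} [AddCommMonoid M] [Fintype W] (Q : W → Bool → Prop) (R : W → Prop)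
    (hQR : ∀ ℓ, R ℓ ↔ (Q ℓ true ∨ Q ℓ false)) (hex : ∀ ℓ, ¬(Q ℓ true ∧ Q ℓ false))
    (f : W → M) :
    ∑ p ∈ @Finset.filter _ (fun p : W × Bool => Q p.1 p.2) (Classical.decPred _) Finset.univ,
        f p.1
      = ∑ ℓ ∈ @Finset.filter _ (fun ℓ => R ℓ) (Classical.decPred _) Finset.univ, f ℓ := by
  classical
  rw [Finset.sum_filter, Finset.sum_filter, Fintype.sum_prod_type]
  apply Finset.sum_congr rfl
  intro ℓ _
  rw [Fintype.sum_bool]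
  by_cases h1 : Q ℓ true <;> by_cases h2 : Q ℓ false
  · exact absurd ⟨h1, h2⟩ (hex ℓ)
  · simp [h1, h2, (hQR ℓ).2 (Or.inl h1)]
  · simp [h1, h2, (hQR ℓ).2 (Or.inr h2)]
  · have : ¬ R ℓ := fun hr => by rcases (hQR ℓ).1 hr with h | h <;> [exact h1 h; exact h2 h]
    simp [h1, h2, this]

noncomputable def copies (mf : V × V → ℕ) : Finset ((V × V) × Bool × ℕ) :=
  (Finset.univ : Finset ((V × V) × Bool)).biUnion
    (fun p => (Finset.range (3 * mf p.1)).image (fun i => (p.1, p.2, i)))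

lemma mem_copies (mf : V × V → ℕ) (s : (V × V) × Bool × ℕ) :
    s ∈ copies mf ↔ s.2.2 < 3 * mf s.1 := by
  unfold copies
  simp only [Finset.mem_biUnion, Finset.mem_image, Finset.mem_range, Finset.mem_univ, true_and]
  constructor
  · rintro ⟨p, i, hi, rfl⟩
    exact hi
  · intro h
    exact ⟨(s.1, s.2.1), s.2.2, h, rfl⟩

noncomputable def bse (s : (V × V) × Bool × ℕ) : V := if s.2.1 then s.1.1 else s.1.2

noncomputable def topv (s : (V × V) × Bool × ℕ) : V := meet G hT r s.1.1 s.1.2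

def covC (s : (V × V) × Bool × ℕ) (e : Sym2 V) : Prop :=
  covE G hT r (bse s) (topv G hT r s) e

noncomputable def SS (mf : V × V → ℕ) (e : Sym2 V) : Finset ((V × V) × Bool × ℕ) :=
  @Finset.filter _ (fun s => covC G hT r s e) (Classical.decPred _) (copies mf)

lemma mem_SS (mf : V × V → ℕ) (e : Sym2 V) (s : (V × V) × Bool × ℕ) :
    s ∈ SS G hT r mf e ↔ (s.2.2 < 3 * mf s.1 ∧ covC G hT r s e) := by
  classical
  unfold SS
  rw [Finset.filter_congr_decidable, Finset.mem_filter, mem_copies]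

lemma card_SS (mf : V × V → ℕ) (e : Sym2 V) (he : e ∈ G.edgeSet) :
    (SS G hT r mf e).card
      = ∑ ℓ ∈ @Finset.filter _ (fun ℓ : V × V => Covers G ℓ.1 ℓ.2 e)
          (Classical.decPred _) Finset.univ, 3 * mf ℓ := by
  classical
  have hfb : SS G hT r mf e
      = (Finset.univ.filter
          (fun p : (V × V) × Bool =>
            covE G hT r (if p.2 then p.1.1 else p.1.2) (meet G hT r p.1.1 p.1.2) e)).biUnion
          (fun p => (Finset.range (3 * mf p.1)).image (fun i => (p.1, p.2, i))) := by
    ext s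
    rw [mem_SS, Finset.mem_biUnion]
    constructor
    · rintro ⟨h1, h2⟩
      refine ⟨(s.1, s.2.1), ?_, ?_⟩
      · rw [Finset.mem_filter]
        exact ⟨Finset.mem_univ _, h2⟩
      · simp only [Finset.mem_image, Finset.mem_range]
        exact ⟨s.2.2, h1, rfl⟩
    · rintro ⟨p, hp, hs⟩
      simp only [Finset.mem_image, Finset.mem_range] at hs
      obtain ⟨i, hi, rfl⟩ := hs
      rw [Finset.mem_filter] at hp
      exact ⟨hi, hp.2⟩
  rw [hfb, Finset.card_biUnion]
  · have h1 : ∀ p ∈ Finset.univ.filter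
        (fun p : (V × V) × Bool =>
          covE G hT r (if p.2 then p.1.1 else p.1.2) (meet G hT r p.1.1 p.1.2) e),
        ((Finset.range (3 * mf p.1)).image (fun i => (p.1, p.2, i))).card = 3 * mf p.1 := by
      intro p _
      rw [Finset.card_image_of_injective _ (by intro i j hij; simpa using hij),
        Finset.card_range]
    rw [Finset.sum_congr rfl h1]
    exact sum_pairs (W := V × V)
      (fun ℓ b => covE G hT r (if b then ℓ.1 else ℓ.2) (meet G hT r ℓ.1 ℓ.2) e)
      (fun ℓ => Covers G ℓ.1 ℓ.2 e)
      (fun ℓ => by simpa using covers_iff G hT r ℓ.1 ℓ.2 e he)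
      (fun ℓ => by simpa using covers_not_both G hT r ℓ.1 ℓ.2 e)
      (fun ℓ => 3 * mf ℓ)
  · intro p _ q _ hpq
    simp only [Finset.disjoint_left, Finset.mem_image, Finset.mem_range]
    rintro s ⟨i, _, rfl⟩ ⟨j, _, h⟩
    apply hpq
    obtain ⟨h1, h2⟩ := Prod.ext_iff.1 h
    obtain ⟨h3, _⟩ := Prod.ext_iff.1 h2
    exact Prod.ext h1.symm h3.symm

lemma card_SS_ge (x : V × V → ℝ) (k : ℕ) (mf : V × V → ℕ)
    (hm : ∀ ℓ, (k : ℝ) * x ℓ = mf ℓ)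
    (e : Sym2 V) (he : e ∈ G.edgeSet) (hfe : 4/3 ≤ covWeight G x e) :
    4 * k ≤ (SS G hT r mf e).card := by
  classical
  have hcast : ((SS G hT r mf e).card : ℝ) = 3 * (k : ℝ) * covWeight G x e := by
    rw [card_SS G hT r mf e he]
    unfold covWeight
    rw [Finset.mul_sum, Nat.cast_sum]
    refine Finset.sum_congr (by simp only [Finset.filter_congr_decidable]) ?_
    intro ℓ _
    push_cast
    rw [← hm ℓ]
    ring
  have h43 : (4 * k : ℝ) ≤ ((SS G hT r mf e).card : ℝ) := by
    rw [hcast]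
    calc (4 * k : ℝ) = 3 * k * (4/3) := by ring
    _ ≤ 3 * k * covWeight G x e := by
        apply mul_le_mul_of_nonneg_left hfe (by positivity)
  exact_mod_cast h43

/-! ### Trimming: choosing exactly `N` copies per edge, consistently -/

lemma pickK_ex (N : ℕ) (F S : Finset ((V × V) × Bool × ℕ)) :
    ∃ K : Finset ((V × V) × Bool × ℕ),
      F ∩ S ⊆ K ∧ K ⊆ S ∧ K.card = min (max N (F ∩ S).card) S.card := by
  have h1 : (F ∩ S).card ≤ S.card :=
    Finset.card_le_card (Finset.inter_subset_right : F ∩ S ⊆ S)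
  obtain ⟨K, hK1, hK2, hK3⟩ :=
    Finset.exists_subsuperset_card_eq (n := min (max N (F ∩ S).card) S.card)
      (Finset.inter_subset_right : F ∩ S ⊆ S) (by omega) (by omega)
  refine ⟨K, hK1, hK2, ?_⟩
  rw [hK3]

noncomputable def pickK (N : ℕ) (F S : Finset ((V × V) × Bool × ℕ)) :
    Finset ((V × V) × Bool × ℕ) :=
  (pickK_ex N F S).choose

lemma pickK_spec (N : ℕ) (F S : Finset ((V × V) × Bool × ℕ)) :
    F ∩ S ⊆ pickK N F S ∧ pickK N F S ⊆ S ∧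
      (pickK N F S).card = min (max N (F ∩ S).card) S.card :=
  (pickK_ex N F S).choose_spec

noncomputable def parE (e : Sym2 V) : Sym2 V :=
  s(par G hT r (cvx G hT r e), par G hT r (par G hT r (cvx G hT r e)))

noncomputable def Kaux (mf : V × V → ℕ) (N : ℕ) : ℕ → Sym2 V → Finset ((V × V) × Bool × ℕ)
  | 0, e => pickK N ∅ (SS G hT r mf e)
  | (n+1), e => pickK N (Kaux mf N n (parE G hT r e)) (SS G hT r mf e)

noncomputable def KE (mf : V × V → ℕ) (N : ℕ) (e : Sym2 V) :
    Finset ((V × V) × Bool × ℕ) :=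
  Kaux G hT r mf N (dep G hT r (cvx G hT r e) - 1) e

lemma KE_subset (mf : V × V → ℕ) (N : ℕ) (e : Sym2 V) :
    KE G hT r mf N e ⊆ SS G hT r mf e := by
  unfold KE
  cases h : dep G hT r (cvx G hT r e) - 1 <;>
    · unfold Kaux
      exact (pickK_spec _ _ _).2.1

lemma dep_cvx_pos (e : Sym2 V) (he : e ∈ G.edgeSet) :
    1 ≤ dep G hT r (cvx G hT r e) := by
  have := cvx_ne_r G hT r e he
  rcases Nat.eq_zero_or_pos (dep G hT r (cvx G hT r e)) with h | h
  · exact absurd (eq_r_of_dep G hT r _ h) this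
  · exact h

lemma parE_spec (e : Sym2 V) (he : e ∈ G.edgeSet)
    (hpr : par G hT r (cvx G hT r e) ≠ r) :
    parE G hT r e ∈ G.edgeSet ∧
      cvx G hT r (parE G hT r e) = par G hT r (cvx G hT r e) := by
  have hadj : G.Adj (par G hT r (cvx G hT r e))
      (par G hT r (par G hT r (cvx G hT r e))) := (P_step G hT r _ hpr).1
  have hmem : parE G hT r e ∈ G.edgeSet := by
    unfold parE
    rw [SimpleGraph.mem_edgeSet]
    exact hadj
  refine ⟨hmem, ?_⟩
  exact (cvx_uniq G hT r _ hmem _ (Sym2.mem_mk_left _ _) (Sym2.mem_mk_right _ _)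
    hadj.ne').symm

lemma KE_eq (mf : V × V → ℕ) (N : ℕ) (e : Sym2 V) (he : e ∈ G.edgeSet)
    (hpr : par G hT r (cvx G hT r e) ≠ r) :
    KE G hT r mf N e = pickK N (KE G hT r mf N (parE G hT r e)) (SS G hT r mf e) := by
  have hc := cvx_ne_r G hT r e he
  have hd := dep_par G hT r _ hc
  have hd1 : 1 ≤ dep G hT r (par G hT r (cvx G hT r e)) := by
    rcases Nat.eq_zero_or_pos (dep G hT r (par G hT r (cvx G hT r e))) with h | h
    · exact absurd (eq_r_of_dep G hT r _ h) hpr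
    · exact h
  obtain ⟨hpe, hcpe⟩ := parE_spec G hT r e he hpr
  unfold KE
  rw [hcpe]
  have h2 : dep G hT r (cvx G hT r e) - 1 = (dep G hT r (par G hT r (cvx G hT r e)) - 1) + 1 := by
    omega
  rw [h2]
  rfl

lemma KE_card (mf : V × V → ℕ) (N : ℕ)
    (hS : ∀ e ∈ G.edgeSet, N ≤ (SS G hT r mf e).card) :
    ∀ n (e : Sym2 V), e ∈ G.edgeSet → dep G hT r (cvx G hT r e) = n →
      (KE G hT r mf N e).card = N := by
  intro n
  induction n using Nat.strong_induction_on with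
  | _ n ih =>
    intro e he hn
    by_cases hpr : par G hT r (cvx G hT r e) = r
    · have hd1 : dep G hT r (cvx G hT r e) = 1 := by
        have := dep_par G hT r _ (cvx_ne_r G hT r e he)
        rw [hpr, dep_r] at this
        omega
      unfold KE
      rw [hd1]
      show (Kaux G hT r mf N 0 e).card = N
      unfold Kaux
      rw [(pickK_spec _ _ _).2.2, Finset.empty_inter, Finset.card_empty]
      have := hS e he
      omega
    · rw [KE_eq G hT r mf N e he hpr]
      obtain ⟨hpe, hcpe⟩ := parE_spec G hT r e he hpr
      have hdp := dep_par G hT r _ (cvx_ne_r G hT r e he)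
      have hlt : dep G hT r (cvx G hT r (parE G hT r e)) < n := by
        rw [hcpe]; omega
      have hcard := ih _ hlt (parE G hT r e) hpe rfl
      rw [(pickK_spec _ _ _).2.2]
      have h1 : (KE G hT r mf N (parE G hT r e) ∩ SS G hT r mf e).card ≤ N := by
        calc (KE G hT r mf N (parE G hT r e) ∩ SS G hT r mf e).card
            ≤ (KE G hT r mf N (parE G hT r e)).card :=
              Finset.card_le_card Finset.inter_subset_left
          _ = N := hcard
      have h2 := hS e he
      omega

lemma KE_forced (mf : V × V → ℕ) (N : ℕ) (e : Sym2 V) (he : e ∈ G.edgeSet)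
    (hpr : par G hT r (cvx G hT r e) ≠ r) :
    KE G hT r mf N (parE G hT r e) ∩ SS G hT r mf e ⊆ KE G hT r mf N e := by
  rw [KE_eq G hT r mf N e he hpr]
  exact (pickK_spec _ _ _).1

lemma KE_down (mf : V × V → ℕ) (N : ℕ) :
    ∀ n (e f : Sym2 V), e ∈ G.edgeSet → f ∈ G.edgeSet →
      dep G hT r (cvx G hT r f) = n →
      ∀ s, s ∈ KE G hT r mf N e → covC G hT r s f →
        anc G hT r (cvx G hT r e) (cvx G hT r f) → s ∈ KE G hT r mf N f := by
  intro n
  induction n using Nat.strong_induction_on with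
  | _ n ih =>
    intro e f he hf hn s hse hcf hanc
    by_cases hle : dep G hT r (cvx G hT r f) ≤ dep G hT r (cvx G hT r e)
    · have hcc : cvx G hT r e = cvx G hT r f := anc_eq G hT r _ _ hanc hle
      have hef : e = f := by
        rw [cvx_eq G hT r e he, cvx_eq G hT r f hf, hcc]
      rw [← hef]
      exact hse
    · push_neg at hle
      have hcfr : cvx G hT r f ≠ r := cvx_ne_r G hT r f hf
      have hdpz := dep_par G hT r _ hcfr
      have hdeppos := dep_cvx_pos G hT r e he
      have hzr : par G hT r (cvx G hT r f) ≠ r := by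
        intro h
        rw [h, dep_r] at hdpz
        omega
      obtain ⟨hpe, hcpe⟩ := parE_spec G hT r f hf hzr
      have hancz : anc G hT r (cvx G hT r e) (par G hT r (cvx G hT r f)) := by
        rcases (anc_iff G hT r _ _ hcfr).1 hanc with h | h
        · exfalso; rw [h] at hle; omega
        · exact h
      -- s covers the edge parE f
      obtain ⟨he1, he2, he3⟩ : covC G hT r s e :=
        ((mem_SS G hT r mf e s).1 (KE_subset G hT r mf N e hse)).2
      obtain ⟨hf1, hf2, hf3⟩ := id hcf
      have hcov' : covC G hT r s (parE G hT r f) := by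
        refine ⟨?_, ?_, ?_⟩ <;> rw [hcpe]
        · exact anc_trans G hT r _ (bse s) (cvx G hT r f) _ rfl hf1
            ((anc_iff G hT r _ _ hcfr).2 (Or.inr (anc_refl G hT r _)))
        · exact anc_trans G hT r _ _ (cvx G hT r e) _ rfl hancz he2
        · intro hcontra
          have d1 : dep G hT r (topv G hT r s) < dep G hT r (cvx G hT r e) :=
            (anc_dep_lt G hT r _ _ _ rfl he2).2 (fun hh => he3 hh.symm)
          rw [← hcontra] at d1
          omega
      have hsp : s ∈ KE G hT r mf N (parE G hT r f) := by
        apply ih (dep G hT r (cvx G hT r (parE G hT r f))) (by rw [hcpe]; omega)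
          e (parE G hT r f) he hpe rfl s hse hcov'
        rw [hcpe]
        exact hancz
      apply KE_forced G hT r mf N f hf hzr
      rw [Finset.mem_inter]
      refine ⟨hsp, ?_⟩
      rw [mem_SS]
      exact ⟨((mem_SS G hT r mf e s).1 (KE_subset G hT r mf N e hse)).1, hcf⟩

noncomputable def TrSet (mf : V × V → ℕ) (N : ℕ) (s : (V × V) × Bool × ℕ) :
    Finset (Sym2 V) :=
  @Finset.filter _ (fun e => e ∈ G.edgeSet ∧ s ∈ KE G hT r mf N e)
    (Classical.decPred _) Finset.univ

lemma mem_TrSet (mf : V × V → ℕ) (N : ℕ) (s : (V × V) × Bool × ℕ) (e : Sym2 V) :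
    e ∈ TrSet G hT r mf N s ↔ (e ∈ G.edgeSet ∧ s ∈ KE G hT r mf N e) := by
  classical
  unfold TrSet
  rw [Finset.filter_congr_decidable, Finset.mem_filter]
  simp

noncomputable def topT (mf : V × V → ℕ) (N : ℕ) (s : (V × V) × Bool × ℕ) : Sym2 V :=
  if h : (TrSet G hT r mf N s).Nonempty then
    (Finset.exists_min_image (TrSet G hT r mf N s) (fun e => dep G hT r (cvx G hT r e))
      h).choose
  else s(r, r)

lemma topT_spec (mf : V × V → ℕ) (N : ℕ) (s : (V × V) × Bool × ℕ)
    (h : (TrSet G hT r mf N s).Nonempty) :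
    topT G hT r mf N s ∈ TrSet G hT r mf N s ∧
      ∀ e ∈ TrSet G hT r mf N s,
        dep G hT r (cvx G hT r (topT G hT r mf N s)) ≤ dep G hT r (cvx G hT r e) := by
  unfold topT
  rw [dif_pos h]
  exact (Finset.exists_min_image (TrSet G hT r mf N s)
    (fun e => dep G hT r (cvx G hT r e)) h).choose_spec

lemma anc_topT (mf : V × V → ℕ) (N : ℕ) (s : (V × V) × Bool × ℕ) (e : Sym2 V)
    (heT : e ∈ TrSet G hT r mf N s) :
    anc G hT r (cvx G hT r (topT G hT r mf N s)) (cvx G hT r e) := by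
  have hne : (TrSet G hT r mf N s).Nonempty := ⟨e, heT⟩
  obtain ⟨hfT, hmin⟩ := topT_spec G hT r mf N s hne
  obtain ⟨hee, hse⟩ := (mem_TrSet G hT r mf N s e).1 heT
  obtain ⟨hfe, hsf⟩ := (mem_TrSet G hT r mf N s _).1 hfT
  obtain ⟨e1, _, _⟩ : covC G hT r s e :=
    ((mem_SS G hT r mf e s).1 (KE_subset G hT r mf N e hse)).2
  obtain ⟨f1, _, _⟩ : covC G hT r s (topT G hT r mf N s) :=
    ((mem_SS G hT r mf _ s).1 (KE_subset G hT r mf N _ hsf)).2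
  exact anc_of_dep_le G hT r (bse s) _ _ f1 e1 (hmin e heT)

lemma key_lemma (mf : V × V → ℕ) (N : ℕ) (s s' : (V × V) × Bool × ℕ) (e : Sym2 V)
    (he : e ∈ G.edgeSet) (hs : s ∈ KE G hT r mf N e) (hs' : s' ∈ KE G hT r mf N e)
    (hd : dep G hT r (cvx G hT r (topT G hT r mf N s'))
        ≤ dep G hT r (cvx G hT r (topT G hT r mf N s))) :
    s' ∈ KE G hT r mf N (topT G hT r mf N s) := by
  have heT : e ∈ TrSet G hT r mf N s := (mem_TrSet G hT r mf N s e).2 ⟨he, hs⟩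
  have heT' : e ∈ TrSet G hT r mf N s' := (mem_TrSet G hT r mf N s' e).2 ⟨he, hs'⟩
  obtain ⟨hfT, _⟩ := topT_spec G hT r mf N s ⟨e, heT⟩
  obtain ⟨hf'T', _⟩ := topT_spec G hT r mf N s' ⟨e, heT'⟩
  obtain ⟨hfE, hsf⟩ := (mem_TrSet G hT r mf N s _).1 hfT
  obtain ⟨hf'E, hs'f'⟩ := (mem_TrSet G hT r mf N s' _).1 hf'T'
  have anc1 := anc_topT G hT r mf N s e heT
  have anc2 := anc_topT G hT r mf N s' e heT'
  have anc3 : anc G hT r (cvx G hT r (topT G hT r mf N s'))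
      (cvx G hT r (topT G hT r mf N s)) :=
    anc_of_dep_le G hT r (cvx G hT r e) _ _ anc2 anc1 hd
  obtain ⟨e1, e2, e3⟩ : covC G hT r s' e :=
    ((mem_SS G hT r mf e s').1 (KE_subset G hT r mf N e hs')).2
  obtain ⟨g1, g2, g3⟩ : covC G hT r s' (topT G hT r mf N s') :=
    ((mem_SS G hT r mf _ s').1 (KE_subset G hT r mf N _ hs'f')).2
  have hcov : covC G hT r s' (topT G hT r mf N s) := by
    refine ⟨?_, ?_, ?_⟩
    · exact anc_trans G hT r _ (bse s') (cvx G hT r e) _ rfl e1 anc1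
    · exact anc_trans G hT r _ _ (cvx G hT r (topT G hT r mf N s')) _ rfl anc3 g2
    · intro hcontra
      have d1 : dep G hT r (topv G hT r s')
          < dep G hT r (cvx G hT r (topT G hT r mf N s')) :=
        (anc_dep_lt G hT r _ _ _ rfl g2).2 (fun hh => g3 hh.symm)
      rw [← hcontra] at d1
      omega
  exact KE_down G hT r mf N _ (topT G hT r mf N s') (topT G hT r mf N s) hf'E hfE rfl
    s' hs'f' hcov anc3

/-! ### Greedy colouring -/

def confl (mf : V × V → ℕ) (N : ℕ) (s t : (V × V) × Bool × ℕ) : Prop :=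
  ∃ e, e ∈ G.edgeSet ∧ s ∈ KE G hT r mf N e ∧ t ∈ KE G hT r mf N e

noncomputable def goodC (mf : V × V → ℕ) (N : ℕ) : Finset ((V × V) × Bool × ℕ) :=
  @Finset.filter _ (fun s => (TrSet G hT r mf N s).Nonempty)
    (Classical.decPred _) (copies mf)

lemma mem_goodC (mf : V × V → ℕ) (N : ℕ) (s : (V × V) × Bool × ℕ) :
    s ∈ goodC G hT r mf N ↔ (s ∈ copies mf ∧ (TrSet G hT r mf N s).Nonempty) := by
  classical
  unfold goodC
  rw [Finset.filter_congr_decidable, Finset.mem_filter]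

noncomputable def LL (mf : V × V → ℕ) (N : ℕ) : List ((V × V) × Bool × ℕ) :=
  ((goodC G hT r mf N).toList).mergeSort
    (fun a b => decide (dep G hT r (cvx G hT r (topT G hT r mf N a))
      ≤ dep G hT r (cvx G hT r (topT G hT r mf N b))))

lemma LL_perm (mf : V × V → ℕ) (N : ℕ) :
    (LL G hT r mf N).Perm (goodC G hT r mf N).toList :=
  List.mergeSort_perm _ _

lemma mem_LL (mf : V × V → ℕ) (N : ℕ) (s : (V × V) × Bool × ℕ) :
    s ∈ LL G hT r mf N ↔ s ∈ goodC G hT r mf N := by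
  rw [(LL_perm G hT r mf N).mem_iff, Finset.mem_toList]

lemma LL_nodup (mf : V × V → ℕ) (N : ℕ) : (LL G hT r mf N).Nodup :=
  ((LL_perm G hT r mf N).nodup_iff).2 (Finset.nodup_toList _)

lemma LL_sorted (mf : V × V → ℕ) (N : ℕ) (i j : ℕ) (hij : i < j)
    (hj : j < (LL G hT r mf N).length) :
    dep G hT r (cvx G hT r (topT G hT r mf N ((LL G hT r mf N)[i]'(hij.trans hj))))
      ≤ dep G hT r (cvx G hT r (topT G hT r mf N ((LL G hT r mf N)[j]'hj))) := by
  have hp := List.pairwise_mergeSort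
    (le := fun a b => decide (dep G hT r (cvx G hT r (topT G hT r mf N a))
      ≤ dep G hT r (cvx G hT r (topT G hT r mf N b))))
    (fun a b c hab hbc => by
      simp only [decide_eq_true_eq] at *
      omega)
    (fun a b => by
      simp only [Bool.or_eq_true, decide_eq_true_eq]
      omega)
    ((goodC G hT r mf N).toList)
  have := List.pairwise_iff_getElem.1 hp i j (hij.trans hj) hj hij
  simp only [decide_eq_true_eq] at this
  exact this

open Classical in
noncomputable def col (mf : V × V → ℕ) (N : ℕ) (i : ℕ) : ℕ :=
  let D := Finset.range N \ ((((Finset.range i).attach).filter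
        (fun j => confl G hT r mf N ((LL G hT r mf N).getD j.1 ((r,r),true,0))
          ((LL G hT r mf N).getD i ((r,r),true,0)))).image
      (fun j => col mf N j.1))
  if h : D.Nonempty then D.min' h else 0
decreasing_by exact Finset.mem_range.mp j.2

lemma col_spec (mf : V × V → ℕ) (N : ℕ)
    (hS : ∀ e ∈ G.edgeSet, N ≤ (SS G hT r mf e).card) (hN : 0 < N)
    (i : ℕ) (hi : i < (LL G hT r mf N).length) :
    col G hT r mf N i < N ∧
      ∀ j, j < i →
        confl G hT r mf N ((LL G hT r mf N).getD j ((r,r),true,0))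
          ((LL G hT r mf N).getD i ((r,r),true,0)) →
        col G hT r mf N i ≠ col G hT r mf N j := by
  classical
  set jnk : (V × V) × Bool × ℕ := ((r,r),true,0) with hjnk
  set L := LL G hT r mf N with hL
  set si := L.getD i jnk with hsi
  have hsimem : si ∈ goodC G hT r mf N := by
    rw [← mem_LL G hT r mf N si, hsi, List.getD_eq_getElem L jnk hi]
    exact List.getElem_mem hi
  have hTne : (TrSet G hT r mf N si).Nonempty :=
    ((mem_goodC G hT r mf N si).1 hsimem).2
  obtain ⟨hfT, _⟩ := topT_spec G hT r mf N si hTne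
  obtain ⟨hfE, hsif⟩ := (mem_TrSet G hT r mf N si _).1 hfT
  have hKcard : (KE G hT r mf N (topT G hT r mf N si)).card = N :=
    KE_card G hT r mf N hS _ _ hfE rfl
  -- the set of previously used conflicting colours
  set Fl := (((Finset.range i).attach).filter
      (fun j => confl G hT r mf N (L.getD j.1 jnk) (L.getD i jnk))) with hFl
  have hInj : ∀ j ∈ Fl, ∀ j' ∈ Fl,
      L.getD j.1 jnk = L.getD j'.1 jnk → j = j' := by
    intro j hj j' hj' heq
    have hjlt : j.1 < L.length := lt_trans (Finset.mem_range.mp j.2) hi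
    have hj'lt : j'.1 < L.length := lt_trans (Finset.mem_range.mp j'.2) hi
    rw [List.getD_eq_getElem L jnk hjlt, List.getD_eq_getElem L jnk hj'lt] at heq
    have hnd := LL_nodup G hT r mf N
    rw [← hL] at hnd
    have := (List.nodup_iff_injective_get).1 hnd
      (a₁ := ⟨j.1, hjlt⟩) (a₂ := ⟨j'.1, hj'lt⟩) (by simpa using heq)
    exact Subtype.ext (by simpa using this)
  have hMaps : ∀ j ∈ Fl, L.getD j.1 jnk
      ∈ KE G hT r mf N (topT G hT r mf N si) \ {si} := by
    intro j hj
    rw [hFl, Finset.mem_filter] at hj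
    obtain ⟨hj1, e', he'E, hj2, hi2⟩ := hj
    have hjlt : j.1 < L.length := lt_trans (Finset.mem_range.mp j.2) hi
    have hsort := LL_sorted G hT r mf N j.1 i (Finset.mem_range.mp j.2) hi
    rw [Finset.mem_sdiff]
    constructor
    · apply key_lemma G hT r mf N si (L.getD j.1 jnk) e' he'E hi2 hj2
      rw [List.getD_eq_getElem L jnk hjlt]
      rw [hsi, List.getD_eq_getElem L jnk hi]
      exact hsort
    · rw [Finset.mem_singleton]
      intro heq
      have hjne : j.1 ≠ i := Nat.ne_of_lt (Finset.mem_range.mp j.2)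
      apply hjne
      have hnd := LL_nodup G hT r mf N
      rw [← hL] at hnd
      rw [hsi, List.getD_eq_getElem L jnk hi, List.getD_eq_getElem L jnk hjlt] at heq
      have := (List.nodup_iff_injective_get).1 hnd
        (a₁ := ⟨j.1, hjlt⟩) (a₂ := ⟨i, hi⟩) (by simpa using heq)
      simpa using this
  have hFlcard : Fl.card ≤ N - 1 := by
    have h1 : Fl.card ≤ (KE G hT r mf N (topT G hT r mf N si) \ {si}).card :=
      Finset.card_le_card_of_injOn (fun j => L.getD j.1 jnk) hMaps
        (fun j hj j' hj' => hInj j hj j' hj')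
    have h2 : (KE G hT r mf N (topT G hT r mf N si) \ {si}).card = N - 1 := by
      rw [Finset.card_sdiff_of_subset (Finset.singleton_subset_iff.2 hsif), hKcard,
        Finset.card_singleton]
    omega
  have hImgcard : (Fl.image (fun j => col G hT r mf N j.1)).card ≤ N - 1 :=
    le_trans (Finset.card_image_le) hFlcard
  set D := Finset.range N \ (Fl.image (fun j => col G hT r mf N j.1)) with hD
  have hDne : D.Nonempty := by
    rw [← Finset.card_pos]
    have := Finset.le_card_sdiff (Fl.image (fun j => col G hT r mf N j.1))
      (Finset.range N)
    rw [Finset.card_range] at this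
    rw [← hD] at this
    omega
  have hcol : col G hT r mf N i = D.min' hDne := by
    rw [col]
    simp only [← hL, ← hjnk, ← hsi, ← hFl, ← hD]
    rw [dif_pos hDne]
  have hmem : col G hT r mf N i ∈ D := by
    rw [hcol]; exact Finset.min'_mem _ _
  rw [hD, Finset.mem_sdiff, Finset.mem_range] at hmem
  refine ⟨hmem.1, ?_⟩
  intro j hji hconf heq
  apply hmem.2
  rw [Finset.mem_image]
  refine ⟨⟨j, Finset.mem_range.2 hji⟩, ?_, heq.symm⟩
  rw [hFl, Finset.mem_filter]
  exact ⟨Finset.mem_attach _ _, hconf⟩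

lemma edge_colors (mf : V × V → ℕ) (N : ℕ)
    (hS : ∀ e ∈ G.edgeSet, N ≤ (SS G hT r mf e).card) (hN : 0 < N)
    (e : Sym2 V) (he : e ∈ G.edgeSet) (t : ℕ) (ht : t < N) :
    ∃ i < (LL G hT r mf N).length,
      (LL G hT r mf N).getD i ((r,r),true,0) ∈ KE G hT r mf N e ∧
        col G hT r mf N i = t := by
  classical
  set L := LL G hT r mf N with hL
  set jnk : (V × V) × Bool × ℕ := ((r,r),true,0) with hjnk
  set I := (Finset.range L.length).filter (fun i => L.getD i jnk ∈ KE G hT r mf N e)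
    with hI
  have hKcard : (KE G hT r mf N e).card = N := KE_card G hT r mf N hS _ e he rfl
  have hnd := LL_nodup G hT r mf N
  rw [← hL] at hnd
  have hgetInj : ∀ i ∈ I, ∀ j ∈ I, L.getD i jnk = L.getD j jnk → i = j := by
    intro i hi j hj heq
    rw [hI, Finset.mem_filter, Finset.mem_range] at hi hj
    rw [List.getD_eq_getElem L jnk hi.1, List.getD_eq_getElem L jnk hj.1] at heq
    have := (List.nodup_iff_injective_get).1 hnd
      (a₁ := ⟨i, hi.1⟩) (a₂ := ⟨j, hj.1⟩) (by simpa using heq)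
    simpa using this
  have hIcard : I.card = N := by
    rw [← hKcard]
    apply Finset.card_bij (fun i _ => L.getD i jnk)
    · intro i hi
      rw [hI, Finset.mem_filter] at hi
      exact hi.2
    · intro i hi j hj heq
      exact hgetInj i hi j hj heq
    · intro s hs
      have hsL : s ∈ L := by
        rw [hL, mem_LL, mem_goodC]
        refine ⟨?_, ⟨e, (mem_TrSet G hT r mf N s e).2 ⟨he, hs⟩⟩⟩
        have := (mem_SS G hT r mf e s).1 (KE_subset G hT r mf N e hs)
        rw [mem_copies]
        exact this.1
      obtain ⟨i, hilt, hieq⟩ := List.mem_iff_getElem.1 hsL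
      refine ⟨i, ?_, ?_⟩
      · rw [hI, Finset.mem_filter, Finset.mem_range]
        refine ⟨hilt, ?_⟩
        rw [List.getD_eq_getElem L jnk hilt, hieq]
        exact hs
      · rw [List.getD_eq_getElem L jnk hilt, hieq]
  have himg : I.image (fun i => col G hT r mf N i) = Finset.range N := by
    apply Finset.eq_of_subset_of_card_le
    · intro t' ht'
      rw [Finset.mem_image] at ht'
      obtain ⟨i, hi, rfl⟩ := ht'
      rw [hI, Finset.mem_filter, Finset.mem_range] at hi
      rw [Finset.mem_range]
      exact (col_spec G hT r mf N hS hN i hi.1).1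
    · rw [Finset.card_range, Finset.card_image_of_injOn]
      · omega
      · intro i hi j hj heq
        by_contra hne
        have hi' : i ∈ I := Finset.mem_coe.1 hi
        have hj' : j ∈ I := Finset.mem_coe.1 hj
        rw [hI, Finset.mem_filter, Finset.mem_range] at hi' hj'
        rcases Nat.lt_or_ge i j with hlt | hge
        · exact (col_spec G hT r mf N hS hN j hj'.1).2 i hlt
            ⟨e, he, hi'.2, hj'.2⟩ heq.symm
        · have hlt : j < i := by omega
          exact (col_spec G hT r mf N hS hN i hi'.1).2 j hlt
            ⟨e, he, hj'.2, hi'.2⟩ heq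
  have : t ∈ I.image (fun i => col G hT r mf N i) := by
    rw [himg, Finset.mem_range]; exact ht
  rw [Finset.mem_image] at this
  obtain ⟨i, hi, hcol⟩ := this
  rw [hI, Finset.mem_filter, Finset.mem_range] at hi
  exact ⟨i, hi.1, hi.2, hcol⟩

/-! ### Cost accounting -/

lemma sum_image_le_nn {α β : Type*} [DecidableEq β] (s : Finset α) (f : α → β) (g : β → ℝ)
    (hg : ∀ b, 0 ≤ g b) : ∑ y ∈ s.image f, g y ≤ ∑ x ∈ s, g (f x) := by
  classical
  rw [← Finset.sum_fiberwise_of_maps_to (fun x hx => Finset.mem_image_of_mem f hx)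
    (fun x => g (f x))]
  apply Finset.sum_le_sum
  intro y hy
  rw [Finset.mem_image] at hy
  obtain ⟨x, hx, rfl⟩ := hy
  have hxP : x ∈ s.filter (fun x' => f x' = f x) := Finset.mem_filter.2 ⟨hx, rfl⟩
  exact Finset.single_le_sum (f := fun x' => g (f x')) (fun _ _ => hg _) hxP

lemma sum_over_LL (mf : V × V → ℕ) (N : ℕ) (g : ((V × V) × Bool × ℕ) → ℝ) :
    ∑ i ∈ Finset.range (LL G hT r mf N).length,
        g ((LL G hT r mf N).getD i ((r,r),true,0))
      = ∑ s ∈ goodC G hT r mf N, g s := by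
  classical
  set L := LL G hT r mf N with hL
  set jnk : (V × V) × Bool × ℕ := ((r,r),true,0) with hjnk
  have hnd := LL_nodup G hT r mf N
  rw [← hL] at hnd
  apply Finset.sum_bij (fun i _ => L.getD i jnk)
  · intro i hi
    rw [Finset.mem_range] at hi
    rw [List.getD_eq_getElem L jnk hi]
    have hmem : L[i] ∈ L := List.getElem_mem hi
    exact (mem_LL G hT r mf N _).1 hmem
  · intro i hi j hj heq
    rw [Finset.mem_range] at hi hj
    rw [List.getD_eq_getElem L jnk hi, List.getD_eq_getElem L jnk hj] at heq
    have := (List.nodup_iff_injective_get).1 hnd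
      (a₁ := ⟨i, hi⟩) (a₂ := ⟨j, hj⟩) (by simpa using heq)
    simpa using this
  · intro s hs
    have hsL : s ∈ L := by rw [hL, mem_LL]; exact hs
    obtain ⟨i, hilt, hieq⟩ := List.mem_iff_getElem.1 hsL
    refine ⟨i, Finset.mem_range.2 hilt, ?_⟩
    rw [List.getD_eq_getElem L jnk hilt, hieq]
  · intro i hi
    rfl

lemma sum_copies (mf : V × V → ℕ) (g : V × V → ℝ) :
    ∑ s ∈ copies mf, g s.1 = ∑ ℓ : V × V, (6 * mf ℓ : ℝ) * g ℓ := by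
  classical
  unfold copies
  rw [Finset.sum_biUnion]
  · rw [Fintype.sum_prod_type]
    have hinner : ∀ p : (V × V) × Bool,
        ∑ s ∈ (Finset.range (3 * mf p.1)).image (fun i => (p.1, p.2, i)), g s.1
          = (3 * mf p.1 : ℝ) * g p.1 := by
      intro p
      rw [Finset.sum_image (by intro i _ j _ hij; simpa using hij)]
      show ∑ _x ∈ Finset.range (3 * mf p.1), g p.1 = _
      rw [Finset.sum_const, Finset.card_range, nsmul_eq_mul]
      push_cast
      ring
    calc ∑ ℓ : V × V, ∑ b : Bool,
          ∑ s ∈ (Finset.range (3 * mf (ℓ, b).1)).image (fun i => ((ℓ, b).1, (ℓ, b).2, i)),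
            g s.1
        = ∑ ℓ : V × V, ∑ b : Bool, (3 * mf ℓ : ℝ) * g ℓ := by
          apply Finset.sum_congr rfl
          intro ℓ _
          apply Finset.sum_congr rfl
          intro b _
          exact hinner (ℓ, b)
      _ = ∑ ℓ : V × V, (6 * mf ℓ : ℝ) * g ℓ := by
          apply Finset.sum_congr rfl
          intro ℓ _
          rw [Fintype.sum_bool]
          ring
  · intro p _ q _ hpq
    simp only [Finset.disjoint_left, Finset.mem_image, Finset.mem_range]
    rintro s ⟨i, _, rfl⟩ ⟨j, _, h⟩
    apply hpq
    obtain ⟨h1, h2⟩ := Prod.ext_iff.1 h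
    obtain ⟨h3, _⟩ := Prod.ext_iff.1 h2
    exact Prod.ext h1.symm h3.symm

lemma goodC_subset (mf : V × V → ℕ) (N : ℕ) : goodC G hT r mf N ⊆ copies mf := by
  intro s hs
  exact ((mem_goodC G hT r mf N s).1 hs).1

end TAPdev

open TAPdev

open Classical in
theorem stmt6 {V : Type*} [Fintype V] [DecidableEq V] (G : SimpleGraph V)
    (hT : G.IsTree) (r : V)
    (x : V × V → ℝ) (hx0 : ∀ ℓ, 0 ≤ x ℓ)
    (hfeas : ∀ e ∈ G.edgeSet, 4/3 ≤ covWeight G x e)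
    (k : ℕ) (hk : 0 < k) (hint : ∀ ℓ, ∃ m : ℕ, (k : ℝ) * x ℓ = m)
    (half : V × V → Bool → Sym2 V → Prop)
    (hsplit : ∀ ℓ e, Covers G ℓ.1 ℓ.2 e ↔ (half ℓ true e ∨ half ℓ false e))
    (hdisj : ∀ ℓ e, ¬(half ℓ true e ∧ half ℓ false e))
    (c : V × V → ℝ) (hc : ∀ ℓ, 0 ≤ c ℓ) :
    (∀ e ∈ G.edgeSet,
      (2 * k : ℝ) ≤ ∑ p ∈ Finset.univ.filter
        (fun p : (V × V) × Bool => half p.1 p.2 e), (3/2) * k * x p.1) ∧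
    (∃ A : Finset (V × V),
      (∀ e ∈ G.edgeSet, ∃ ℓ ∈ A, Covers G ℓ.1 ℓ.2 e) ∧
      ∑ ℓ ∈ A, c ℓ ≤ (3/2) * ∑ ℓ : V × V, c ℓ * x ℓ) := by
  classical
  constructor
  · -- Part 1
    intro e he
    have h1 : ∑ p ∈ Finset.univ.filter
        (fun p : (V × V) × Bool => half p.1 p.2 e), (3/2 : ℝ) * k * x p.1
        = (3/2) * k * covWeight G x e := by
      rw [← Finset.mul_sum]
      unfold covWeight
      congr 1
      exact TAPdev.sum_pairs (W := V × V) (fun ℓ b => half ℓ b e)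
        (fun ℓ => Covers G ℓ.1 ℓ.2 e) (fun ℓ => hsplit ℓ e) (fun ℓ => hdisj ℓ e) x
    rw [h1]
    have h2 := hfeas e he
    calc (2 * k : ℝ) = (3/2) * k * (4/3) := by ring
    _ ≤ (3/2) * k * covWeight G x e := by
        apply mul_le_mul_of_nonneg_left h2 (by positivity)
  · -- Part 2
    set mf : V × V → ℕ := fun ℓ => (hint ℓ).choose with hmf
    have hm : ∀ ℓ, (k : ℝ) * x ℓ = mf ℓ := fun ℓ => (hint ℓ).choose_spec
    set N := 4 * k with hNdef
    have hS : ∀ e ∈ G.edgeSet, N ≤ (TAPdev.SS G hT r mf e).card := fun e he =>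
      TAPdev.card_SS_ge G hT r x k mf hm e he (hfeas e he)
    have hNpos : 0 < N := by omega
    set L := TAPdev.LL G hT r mf N with hLdef
    set jnk : (V × V) × Bool × ℕ := ((r,r),true,0) with hjnk
    set A : ℕ → Finset (V × V) := fun t =>
      ((Finset.range L.length).filter (fun i => TAPdev.col G hT r mf N i = t)).image
        (fun i => (L.getD i jnk).1) with hA
    have hcov : ∀ t, t < N → ∀ e ∈ G.edgeSet, ∃ ℓ ∈ A t, Covers G ℓ.1 ℓ.2 e := by
      intro t ht e he
      obtain ⟨i, hilt, hiK, hicol⟩ := TAPdev.edge_colors G hT r mf N hS hNpos e he t ht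
      refine ⟨(L.getD i jnk).1, ?_, ?_⟩
      · rw [hA]
        apply Finset.mem_image_of_mem
        rw [Finset.mem_filter, Finset.mem_range]
        exact ⟨hilt, hicol⟩
      · have hcovC : TAPdev.covC G hT r (L.getD i jnk) e :=
          ((TAPdev.mem_SS G hT r mf e _).1 (TAPdev.KE_subset G hT r mf N e hiK)).2
        rw [TAPdev.covers_iff G hT r (L.getD i jnk).1.1 (L.getD i jnk).1.2 e he]
        unfold TAPdev.covC TAPdev.bse TAPdev.topv at hcovC
        by_cases hb : (L.getD i jnk).2.1
        · left; rw [if_pos hb] at hcovC; exact hcovC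
        · right; rw [if_neg hb] at hcovC; exact hcovC
    have hcost : ∑ t ∈ Finset.range N, ∑ ℓ ∈ A t, c ℓ
        ≤ ∑ t ∈ Finset.range N, (3/2) * ∑ ℓ : V × V, c ℓ * x ℓ := by
      have step1 : ∑ t ∈ Finset.range N, ∑ ℓ ∈ A t, c ℓ
          ≤ ∑ t ∈ Finset.range N, ∑ i ∈ (Finset.range L.length).filter
              (fun i => TAPdev.col G hT r mf N i = t), c ((L.getD i jnk).1) := by
        apply Finset.sum_le_sum
        intro t _
        rw [hA]
        exact TAPdev.sum_image_le_nn _ _ _ (fun b => hc b)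
      have step2 : ∑ t ∈ Finset.range N, ∑ i ∈ (Finset.range L.length).filter
              (fun i => TAPdev.col G hT r mf N i = t), c ((L.getD i jnk).1)
          = ∑ i ∈ Finset.range L.length, c ((L.getD i jnk).1) := by
        apply Finset.sum_fiberwise_of_maps_to
        intro i hi
        rw [Finset.mem_range] at hi ⊢
        exact (TAPdev.col_spec G hT r mf N hS hNpos i hi).1
      have step3 : ∑ i ∈ Finset.range L.length, c ((L.getD i jnk).1)
          = ∑ s ∈ TAPdev.goodC G hT r mf N, c s.1 := by
        rw [hLdef, hjnk]
        exact TAPdev.sum_over_LL G hT r mf N (fun s => c s.1)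
      have step4 : ∑ s ∈ TAPdev.goodC G hT r mf N, c s.1
          ≤ ∑ s ∈ TAPdev.copies mf, c s.1 :=
        Finset.sum_le_sum_of_subset_of_nonneg (TAPdev.goodC_subset G hT r mf N)
          (fun s _ _ => hc s.1)
      have step5 : ∑ s ∈ TAPdev.copies mf, c s.1
          = ∑ t ∈ Finset.range N, (3/2) * ∑ ℓ : V × V, c ℓ * x ℓ := by
        rw [TAPdev.sum_copies mf c]
        rw [Finset.sum_const, Finset.card_range, nsmul_eq_mul]
        rw [Finset.mul_sum, Finset.mul_sum]
        apply Finset.sum_congr rfl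
        intro ℓ _
        rw [← hm ℓ]
        push_cast [hNdef]
        ring
      calc ∑ t ∈ Finset.range N, ∑ ℓ ∈ A t, c ℓ ≤ _ := step1
      _ = _ := step2
      _ = _ := step3
      _ ≤ _ := step4
      _ = _ := step5
    have hex : ∃ t ∈ Finset.range N, ∑ ℓ ∈ A t, c ℓ
        ≤ (3/2) * ∑ ℓ : V × V, c ℓ * x ℓ := by
      apply Finset.exists_le_of_sum_le
      · rw [Finset.nonempty_range_iff]
        omega
      · exact hcost
    obtain ⟨t, ht, hle⟩ := hex
    exact ⟨A t, hcov t (Finset.mem_range.1 ht), hle⟩
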